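/- Let K ≥ 1 and let X_1, …, X_K, Y_1, …, Y_K be mutually independent random variables, each exponentially distributed with rate 1, and let α > 0. Then lim_{ρ→∞} log ℙ[X_i Y_i ≤ ρ^{−α} for all i = 1,…,K] / log ρ = −Kα. -/

import Mathlib

open MeasureTheory ProbabilityTheory Filter
open scoped ENNReal NNReal

section Stmt11Aux
open Set Real

lemma stmt11aux_expMeasure_Iic (x : ℝ) :
    expMeasure 1 (Set.Iic x) = ENNReal.ofReal (if 0 ≤ x then 1 - Real.exp (-x) else 0) := by
  rw [expMeasure, gammaMeasure, withDensity_apply _ measurableSet_Iic]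
  have h := lintegral_exponentialPDF_eq_antiDeriv (r := 1) one_pos x
  simp only [one_mul] at h
  rw [← h]; rfl

lemma stmt11aux_expMeasure_Iio_zero : expMeasure 1 (Set.Iio 0) = 0 := by
  rw [expMeasure, gammaMeasure, withDensity_apply _ measurableSet_Iio]
  exact lintegral_gammaPDF_of_nonpos le_rfl

variable {Ω : Type*} [MeasurableSpace Ω] {μ : Measure Ω} {X Y : Ω → ℝ}

lemma stmt11aux_meas_Iic (hX : Measurable X) (hXexp : μ.map X = expMeasure 1) (s : ℝ) :
    μ (X ⁻¹' Set.Iic s) = ENNReal.ofReal (if 0 ≤ s then 1 - Real.exp (-s) else 0) := by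
  rw [← Measure.map_apply hX measurableSet_Iic, hXexp, stmt11aux_expMeasure_Iic]

lemma stmt11aux_stmt11aux_meas_Iic_le (hX : Measurable X) (hXexp : μ.map X = expMeasure 1) {s : ℝ} (hs : 0 ≤ s) :
    μ (X ⁻¹' Set.Iic s) ≤ ENNReal.ofReal s := by
  rw [stmt11aux_meas_Iic hX hXexp, if_pos hs]
  exact ENNReal.ofReal_le_ofReal (by nlinarith [Real.add_one_le_exp (-s), Real.exp_pos (-s)])

lemma stmt11aux_meas_Icc (hX : Measurable X) (hXexp : μ.map X = expMeasure 1) {s : ℝ} (hs : 0 ≤ s) :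
    μ (X ⁻¹' Set.Icc 0 s) = ENNReal.ofReal (1 - Real.exp (-s)) := by
  have h1 : X ⁻¹' Set.Iic s = X ⁻¹' Set.Icc 0 s ∪ X ⁻¹' Set.Iio 0 := by
    ext x
    simp only [Set.mem_preimage, Set.mem_Iic, Set.mem_union, Set.mem_Icc, Set.mem_Iio]
    constructor
    · intro h; rcases le_or_gt 0 (X x) with h0 | h0
      · exact Or.inl ⟨h0, h⟩
      · exact Or.inr h0
    · rintro (⟨_, h⟩ | h) <;> linarith
  have h0 : μ (X ⁻¹' Set.Iio 0) = 0 := by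
    rw [← Measure.map_apply hX measurableSet_Iio, hXexp, stmt11aux_expMeasure_Iio_zero]
  have := measure_union_le (μ := μ) (X ⁻¹' Set.Icc 0 s) (X ⁻¹' Set.Iio 0)
  have h2 : μ (X ⁻¹' Set.Iic s) = μ (X ⁻¹' Set.Icc 0 s) := by
    apply le_antisymm
    · rw [h1]; simpa [h0] using this
    · exact measure_mono (Set.preimage_mono Set.Icc_subset_Iic_self)
  rw [← h2, stmt11aux_meas_Iic hX hXexp, if_pos hs]

lemma stmt11aux_pair_lower (hX : Measurable X) (hY : Measurable Y)
    (hXexp : μ.map X = expMeasure 1) (hYexp : μ.map Y = expMeasure 1)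
    (hXY : IndepFun X Y μ) {t : ℝ} (ht : 0 < t) (ht1 : t ≤ 1) :
    ENNReal.ofReal ((1 - Real.exp (-1)) / 2 * t) ≤ μ {ω | X ω * Y ω ≤ t} := by
  have hsub : X ⁻¹' Set.Icc 0 t ∩ Y ⁻¹' Set.Icc 0 1 ⊆ {ω | X ω * Y ω ≤ t} := by
    rintro ω ⟨⟨hx0, hxt⟩, hy0, hy1⟩
    simp only [Set.mem_setOf_eq]
    calc X ω * Y ω ≤ t * 1 := mul_le_mul hxt hy1 hy0 ht.le
    _ = t := mul_one t
  refine le_trans ?_ (measure_mono hsub)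
  rw [hXY.measure_inter_preimage_eq_mul _ _ measurableSet_Icc measurableSet_Icc,
    stmt11aux_meas_Icc hX hXexp ht.le, stmt11aux_meas_Icc hY hYexp zero_le_one,
    ← ENNReal.ofReal_mul (sub_nonneg.mpr (Real.exp_le_one_iff.mpr (by linarith)))]
  apply ENNReal.ofReal_le_ofReal
  have h1 : Real.exp (-t) ≤ 1 - t / 2 := by
    nlinarith [Real.add_one_le_exp t, Real.exp_pos t, Real.exp_neg t,
      mul_inv_cancel₀ (Real.exp_ne_zero t), Real.exp_pos (-t)]
  have h2 : (0:ℝ) < 1 - Real.exp (-1) := by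
    nlinarith [Real.exp_pos (-1), Real.add_one_le_exp (1:ℝ), Real.exp_neg 1,
      mul_inv_cancel₀ (Real.exp_ne_zero 1), Real.exp_pos 1]
  nlinarith

lemma stmt11aux_pair_upper [IsProbabilityMeasure μ] (hX : Measurable X) (hY : Measurable Y)
    (hXexp : μ.map X = expMeasure 1) (hYexp : μ.map Y = expMeasure 1)
    (hXY : IndepFun X Y μ) {δ t : ℝ} (hδ0 : 0 < δ) (hδ1 : δ < 1) (ht : 0 < t) (ht1 : t ≤ 1) :
    μ {ω | X ω * Y ω ≤ t} ≤ ((⌈1/δ⌉₊ : ℝ≥0∞) + 2) * ENNReal.ofReal (t ^ (1 - δ)) := by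
  set m := ⌈1/δ⌉₊ with hm
  have hmδ : 1 ≤ (m : ℝ) * δ := by
    rw [← div_le_iff₀ hδ0]  -- 1/δ ≤ m
    exact Nat.le_ceil _
  have cover : {ω | X ω * Y ω ≤ t} ⊆ (X ⁻¹' Set.Iic t ∪ Y ⁻¹' Set.Iic t) ∪
      ⋃ k ∈ Finset.Icc 1 m, (Y ⁻¹' Set.Iic (t ^ (((k:ℝ) - 1) * δ)) ∩
        X ⁻¹' Set.Iic (t ^ (1 - (k:ℝ) * δ))) := by
    intro ω hω
    simp only [Set.mem_setOf_eq] at hω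
    by_cases hYt : Y ω ≤ t
    · exact Or.inl (Or.inr hYt)
    have hYpos : 0 < Y ω := lt_trans ht (not_le.mp hYt)
    have hXle : X ω ≤ t / Y ω := (le_div_iff₀ hYpos).mpr hω
    by_cases hY1 : 1 < Y ω
    · exact Or.inl (Or.inl (le_trans hXle (div_le_self ht.le hY1.le)))
    push_neg at hY1
    have hmY : t ^ ((m:ℝ) * δ) < Y ω := by
      calc t ^ ((m:ℝ) * δ) ≤ t ^ (1:ℝ) := Real.rpow_le_rpow_of_exponent_ge ht ht1 hmδ
      _ = t := Real.rpow_one t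
      _ < Y ω := not_le.mp hYt
    have hex : ∃ k : ℕ, t ^ ((k:ℝ) * δ) < Y ω := ⟨m, hmY⟩
    set k := Nat.find hex with hkdef
    have hk : t ^ ((k:ℝ) * δ) < Y ω := Nat.find_spec hex
    have hkm : k ≤ m := Nat.find_le hmY
    have hk1 : 1 ≤ k := by
      by_contra h
      push_neg at h
      interval_cases k
      · revert hk; simp only [Nat.cast_zero, zero_mul, Real.rpow_zero]; exact not_lt.mpr hY1
    have hprev : ¬ t ^ (((k - 1 : ℕ):ℝ) * δ) < Y ω := Nat.find_min hex (Nat.sub_lt hk1 one_pos)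
    rw [Nat.cast_sub hk1, Nat.cast_one] at hprev
    refine Or.inr (Set.mem_biUnion (Finset.mem_Icc.mpr ⟨hk1, hkm⟩) ⟨not_lt.mp hprev, ?_⟩)
    have htk : (0:ℝ) < t ^ ((k:ℝ) * δ) := Real.rpow_pos_of_pos ht _
    calc X ω ≤ t / Y ω := hXle
    _ ≤ t / t ^ ((k:ℝ) * δ) := div_le_div_of_nonneg_left ht.le htk hk.le
    _ = t ^ (1 - (k:ℝ) * δ) := by rw [Real.rpow_sub ht, Real.rpow_one]
  have h1δ : (0:ℝ) < 1 - δ := by linarith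
  have hB : ENNReal.ofReal t ≤ ENNReal.ofReal (t ^ (1 - δ)) := by
    apply ENNReal.ofReal_le_ofReal
    calc t = t ^ (1:ℝ) := (Real.rpow_one t).symm
    _ ≤ t ^ (1 - δ) := Real.rpow_le_rpow_of_exponent_ge ht ht1 (by linarith)
  have hband : ∀ k ∈ Finset.Icc 1 m,
      μ (Y ⁻¹' Set.Iic (t ^ (((k:ℝ) - 1) * δ)) ∩ X ⁻¹' Set.Iic (t ^ (1 - (k:ℝ) * δ)))
        ≤ ENNReal.ofReal (t ^ (1 - δ)) := by
    intro k hkmem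
    have hk1 : 1 ≤ k := (Finset.mem_Icc.mp hkmem).1
    have hk1' : (1:ℝ) ≤ (k:ℝ) := by exact_mod_cast hk1
    rw [Set.inter_comm, hXY.measure_inter_preimage_eq_mul _ _ measurableSet_Iic measurableSet_Iic]
    by_cases hc : (k:ℝ) * δ ≤ 1
    · calc μ (X ⁻¹' Set.Iic (t ^ (1 - (k:ℝ) * δ))) * μ (Y ⁻¹' Set.Iic (t ^ (((k:ℝ) - 1) * δ)))
          ≤ ENNReal.ofReal (t ^ (1 - (k:ℝ) * δ)) * ENNReal.ofReal (t ^ (((k:ℝ) - 1) * δ)) :=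
            mul_le_mul' (stmt11aux_stmt11aux_meas_Iic_le hX hXexp (Real.rpow_pos_of_pos ht _).le)
              (stmt11aux_stmt11aux_meas_Iic_le hY hYexp (Real.rpow_pos_of_pos ht _).le)
      _ = ENNReal.ofReal (t ^ (1 - (k:ℝ) * δ) * t ^ (((k:ℝ) - 1) * δ)) :=
            (ENNReal.ofReal_mul (Real.rpow_pos_of_pos ht _).le).symm
      _ = ENNReal.ofReal (t ^ (1 - δ)) := by
            rw [← Real.rpow_add ht]
            ring_nf
    · push_neg at hc
      calc μ (X ⁻¹' Set.Iic (t ^ (1 - (k:ℝ) * δ))) * μ (Y ⁻¹' Set.Iic (t ^ (((k:ℝ) - 1) * δ)))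
          ≤ 1 * ENNReal.ofReal (t ^ (((k:ℝ) - 1) * δ)) :=
            mul_le_mul' prob_le_one (stmt11aux_stmt11aux_meas_Iic_le hY hYexp (Real.rpow_pos_of_pos ht _).le)
      _ = ENNReal.ofReal (t ^ (((k:ℝ) - 1) * δ)) := one_mul _
      _ ≤ ENNReal.ofReal (t ^ (1 - δ)) := by
            apply ENNReal.ofReal_le_ofReal
            apply Real.rpow_le_rpow_of_exponent_ge ht ht1
            nlinarith
  calc μ {ω | X ω * Y ω ≤ t}
      ≤ μ ((X ⁻¹' Set.Iic t ∪ Y ⁻¹' Set.Iic t) ∪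
        ⋃ k ∈ Finset.Icc 1 m, (Y ⁻¹' Set.Iic (t ^ (((k:ℝ) - 1) * δ)) ∩
          X ⁻¹' Set.Iic (t ^ (1 - (k:ℝ) * δ)))) := measure_mono cover
  _ ≤ μ (X ⁻¹' Set.Iic t ∪ Y ⁻¹' Set.Iic t) +
        μ (⋃ k ∈ Finset.Icc 1 m, (Y ⁻¹' Set.Iic (t ^ (((k:ℝ) - 1) * δ)) ∩
          X ⁻¹' Set.Iic (t ^ (1 - (k:ℝ) * δ)))) := measure_union_le _ _
  _ ≤ (μ (X ⁻¹' Set.Iic t) + μ (Y ⁻¹' Set.Iic t)) +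
        ∑ k ∈ Finset.Icc 1 m, μ (Y ⁻¹' Set.Iic (t ^ (((k:ℝ) - 1) * δ)) ∩
          X ⁻¹' Set.Iic (t ^ (1 - (k:ℝ) * δ))) :=
        add_le_add (measure_union_le _ _) (measure_biUnion_finset_le _ _)
  _ ≤ (ENNReal.ofReal (t ^ (1 - δ)) + ENNReal.ofReal (t ^ (1 - δ))) +
        ∑ _k ∈ Finset.Icc 1 m, ENNReal.ofReal (t ^ (1 - δ)) :=
        add_le_add (add_le_add (le_trans (stmt11aux_stmt11aux_meas_Iic_le hX hXexp ht.le) hB)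
          (le_trans (stmt11aux_stmt11aux_meas_Iic_le hY hYexp ht.le) hB)) (Finset.sum_le_sum hband)
  _ = ((m : ℝ≥0∞) + 2) * ENNReal.ofReal (t ^ (1 - δ)) := by
        rw [Finset.sum_const, Nat.card_Icc]
        simp only [Nat.add_sub_cancel, nsmul_eq_mul]
        ring

lemma stmt11aux_meas_iInter_prod {Ω : Type*} [MeasurableSpace Ω] (μ : Measure Ω)
    [IsProbabilityMeasure μ] (K : ℕ) (X Y : Fin K → Ω → ℝ)
    (hX : ∀ i, Measurable (X i)) (hY : ∀ i, Measurable (Y i))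
    (hindep : iIndepFun (m := fun _ : Fin K ⊕ Fin K => (inferInstance : MeasurableSpace ℝ))
      (Sum.elim X Y) μ) (t : ℝ) :
    μ (⋂ i, {ω | X i ω * Y i ω ≤ t}) = ∏ i, μ {ω | X i ω * Y i ω ≤ t} := by
  classical
  have hf : ∀ x : Fin K ⊕ Fin K, Measurable (Sum.elim X Y x) := by
    rintro (i | i)
    · exact hX i
    · exact hY i
  have main : ∀ S : Finset (Fin K),
      μ (⋂ i ∈ S, {ω | X i ω * Y i ω ≤ t}) = ∏ i ∈ S, μ {ω | X i ω * Y i ω ≤ t} := by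
    intro S
    induction S using Finset.induction_on with
    | empty => simp
    | insert j S hj ih =>
      rw [Finset.set_biInter_insert, Finset.prod_insert hj, ← ih]
      set T₁ : Finset (Fin K ⊕ Fin K) := {Sum.inl j, Sum.inr j} with hT₁
      set T₂ : Finset (Fin K ⊕ Fin K) := S.disjSum S with hT₂
      have hdisj : Disjoint T₁ T₂ := by
        rw [Finset.disjoint_left]
        intro a ha₁ ha₂
        rw [hT₁, Finset.mem_insert, Finset.mem_singleton] at ha₁
        rcases ha₁ with h | h <;> rw [h, hT₂] at ha₂
        · exact hj (Finset.inl_mem_disjSum.mp ha₂)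
        · exact hj (Finset.inr_mem_disjSum.mp ha₂)
      have hIF := hindep.indepFun_finset T₁ T₂ hdisj hf
      have hmem1 : Sum.inl j ∈ T₁ := by rw [hT₁]; exact Finset.mem_insert_self _ _
      have hmem2 : Sum.inr j ∈ T₁ := by
        rw [hT₁]; exact Finset.mem_insert_of_mem (Finset.mem_singleton_self _)
      set φ : (∀ _ : ↥T₁, ℝ) → ℝ := fun v => v ⟨Sum.inl j, hmem1⟩ * v ⟨Sum.inr j, hmem2⟩ with hφdef
      have hφ : Measurable φ := (measurable_pi_apply _).mul (measurable_pi_apply _)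
      have hIF2 := hIF.comp hφ measurable_id
      set B : Set (∀ _ : ↥T₂, ℝ) := ⋂ i, ⋂ (hi : i ∈ S),
        {v | v ⟨Sum.inl i, Finset.inl_mem_disjSum.mpr hi⟩ *
          v ⟨Sum.inr i, Finset.inr_mem_disjSum.mpr hi⟩ ≤ t} with hBdef
      have hB : MeasurableSet B := by
        apply MeasurableSet.iInter
        intro i
        apply MeasurableSet.iInter
        intro hi
        exact measurableSet_le (by fun_prop) measurable_const
      have key := hIF2.measure_inter_preimage_eq_mul _ _ (measurableSet_Iic (a := t)) hB
      have e1 : (φ ∘ fun a (i : ↥T₁) => Sum.elim X Y i a) ⁻¹' Set.Iic t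
          = {ω | X j ω * Y j ω ≤ t} := rfl
      have e2 : ((id : (∀ _ : ↥T₂, ℝ) → _) ∘ fun a (i : ↥T₂) => Sum.elim X Y i a) ⁻¹' B
          = ⋂ i ∈ S, {ω | X i ω * Y i ω ≤ t} := by
        ext ω
        simp only [Set.mem_preimage, Function.comp_apply, id_eq, hBdef, Set.mem_iInter,
          Set.mem_setOf_eq]
        rfl
      rw [e1, e2] at key
      exact key
  have huniv : (⋂ i, {ω | X i ω * Y i ω ≤ t}) = ⋂ i ∈ Finset.univ, {ω | X i ω * Y i ω ≤ t} := by
    simp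
  rw [huniv, main Finset.univ]

end Stmt11Aux

theorem stmt11 {Ω : Type*} [MeasurableSpace Ω] (μ : Measure Ω)
    [IsProbabilityMeasure μ] (K : ℕ) (hK : 1 ≤ K)
    (X Y : Fin K → Ω → ℝ)
    (hX : ∀ i, Measurable (X i)) (hY : ∀ i, Measurable (Y i))
    (hXexp : ∀ i, μ.map (X i) = expMeasure 1)
    (hYexp : ∀ i, μ.map (Y i) = expMeasure 1)
    (hindep : iIndepFun (m := fun _ : Fin K ⊕ Fin K => (inferInstance : MeasurableSpace ℝ))
      (Sum.elim X Y) μ)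
    (α : ℝ) (hα : 0 < α) :
    Tendsto
      (fun ρ : ℝ =>
        Real.log ((μ {ω | ∀ i, X i ω * Y i ω ≤ ρ ^ (-α)}).toReal) / Real.log ρ)
      atTop (nhds (-((K : ℝ) * α))) := by
  have pair_lower : ∀ i : Fin K, ∀ {t : ℝ}, 0 < t → t ≤ 1 →
      ENNReal.ofReal ((1 - Real.exp (-1)) / 2 * t) ≤ μ {ω | X i ω * Y i ω ≤ t} :=
    fun i _ ht ht1 => stmt11aux_pair_lower (hX i) (hY i) (hXexp i) (hYexp i)
      (hindep.indepFun (show (Sum.inl i : Fin K ⊕ Fin K) ≠ Sum.inr i by simp)) ht ht1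
  have pair_upper : ∀ i : Fin K, ∀ {δ t : ℝ}, 0 < δ → δ < 1 → 0 < t → t ≤ 1 →
      μ {ω | X i ω * Y i ω ≤ t} ≤ ((⌈1/δ⌉₊ : ENNReal) + 2) * ENNReal.ofReal (t ^ (1 - δ)) :=
    fun i _ _ h1 h2 h3 h4 => stmt11aux_pair_upper (hX i) (hY i) (hXexp i) (hYexp i)
      (hindep.indepFun (show (Sum.inl i : Fin K ⊕ Fin K) ≠ Sum.inr i by simp)) h1 h2 h3 h4
  have meas_iInter_prod : ∀ t : ℝ,
      μ (⋂ i, {ω | X i ω * Y i ω ≤ t}) = ∏ i, μ {ω | X i ω * Y i ω ≤ t} :=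
    stmt11aux_meas_iInter_prod μ K X Y hX hY hindep
  have hKR : (1:ℝ) ≤ (K:ℝ) := by exact_mod_cast hK
  set c : ℝ := (1 - Real.exp (-1)) / 2 with hc
  have hc0 : 0 < c := by
    have : Real.exp (-1) < 1 := Real.exp_lt_one_iff.mpr (by norm_num)
    rw [hc]; linarith
  rw [Metric.tendsto_nhds]
  intro ε hε
  set δ : ℝ := min (1/2) (ε / (4 * K * α)) with hδ
  have hδ0 : 0 < δ := by
    apply lt_min (by norm_num)
    positivity
  have hδ1 : δ < 1 := lt_of_le_of_lt (min_le_left _ _) (by norm_num)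
  set C : ℝ := (⌈1/δ⌉₊ : ℝ) + 2 with hC
  have hC0 : (0:ℝ) < C := by positivity
  have hA : Tendsto (fun ρ : ℝ => (K:ℝ) * Real.log c / Real.log ρ) atTop (nhds 0) :=
    Tendsto.div_atTop tendsto_const_nhds Real.tendsto_log_atTop
  have hB : Tendsto (fun ρ : ℝ => (K:ℝ) * Real.log C / Real.log ρ) atTop (nhds 0) :=
    Tendsto.div_atTop tendsto_const_nhds Real.tendsto_log_atTop
  have hA' : ∀ᶠ ρ : ℝ in atTop, |(K:ℝ) * Real.log c / Real.log ρ| < ε/4 := by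
    have := hA.eventually (eventually_abs_sub_lt 0 (by positivity : (0:ℝ) < ε/4))
    simpa using this
  have hB' : ∀ᶠ ρ : ℝ in atTop, |(K:ℝ) * Real.log C / Real.log ρ| < ε/4 := by
    have := hB.eventually (eventually_abs_sub_lt 0 (by positivity : (0:ℝ) < ε/4))
    simpa using this
  filter_upwards [hA', hB', eventually_gt_atTop (1:ℝ)] with ρ h1 h2 hρ
  have hρ0 : (0:ℝ) < ρ := by linarith
  set t : ℝ := ρ ^ (-α) with htdef
  have ht0 : 0 < t := Real.rpow_pos_of_pos hρ0 _
  have ht1 : t ≤ 1 := Real.rpow_le_one_of_one_le_of_nonpos hρ.le (by linarith)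
  have hlogρ : 0 < Real.log ρ := Real.log_pos hρ
  have hlogt : Real.log t = -α * Real.log ρ := Real.log_rpow hρ0 _
  -- the event as intersection
  have hE : {ω | ∀ i, X i ω * Y i ω ≤ ρ ^ (-α)} = ⋂ i, {ω | X i ω * Y i ω ≤ t} := by
    rw [htdef]; exact Set.setOf_forall _
  set g : ℝ := (μ {ω | ∀ i, X i ω * Y i ω ≤ ρ ^ (-α)}).toReal with hg
  have hgprod : g = ∏ i, (μ {ω | X i ω * Y i ω ≤ t}).toReal := by
    rw [hg, hE, meas_iInter_prod t, ENNReal.toReal_prod]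
  -- lower bound on each factor
  have hlow : ∀ i : Fin K, c * t ≤ (μ {ω | X i ω * Y i ω ≤ t}).toReal := by
    intro i
    have h := pair_lower i ht0 ht1
    have := ENNReal.toReal_mono (measure_ne_top μ _) h
    rwa [ENNReal.toReal_ofReal (by positivity)] at this
  have hup : ∀ i : Fin K, (μ {ω | X i ω * Y i ω ≤ t}).toReal ≤ C * t ^ (1 - δ) := by
    intro i
    have h := pair_upper i hδ0 hδ1 ht0 ht1
    have hfin : ((⌈1/δ⌉₊ : ℝ≥0∞) + 2) * ENNReal.ofReal (t ^ (1 - δ)) ≠ ⊤ := by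
      apply ENNReal.mul_ne_top (by simp) ENNReal.ofReal_ne_top
    have := ENNReal.toReal_mono hfin h
    rwa [ENNReal.toReal_mul, ENNReal.toReal_ofReal (by positivity),
      show ((⌈1/δ⌉₊ : ℝ≥0∞) + 2).toReal = C by
        rw [ENNReal.toReal_add (ENNReal.natCast_ne_top _) (by norm_num)]
        simp [hC]] at this
  -- bounds on g
  have hglow : (c * t) ^ K ≤ g := by
    rw [hgprod]
    calc (c * t) ^ K = ∏ _i : Fin K, (c * t) := by
          rw [Finset.prod_const, Finset.card_univ, Fintype.card_fin]
    _ ≤ ∏ i, (μ {ω | X i ω * Y i ω ≤ t}).toReal :=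
          Finset.prod_le_prod (fun i _ => by positivity) (fun i _ => hlow i)
  have hgup : g ≤ (C * t ^ (1 - δ)) ^ K := by
    rw [hgprod]
    calc ∏ i, (μ {ω | X i ω * Y i ω ≤ t}).toReal
        ≤ ∏ _i : Fin K, (C * t ^ (1 - δ)) :=
          Finset.prod_le_prod (fun i _ => ENNReal.toReal_nonneg) (fun i _ => hup i)
    _ = (C * t ^ (1 - δ)) ^ K := by
          rw [Finset.prod_const, Finset.card_univ, Fintype.card_fin]
  have hgpos : 0 < g := lt_of_lt_of_le (by positivity) hglow
  -- log bounds
  have hloglow : (K:ℝ) * Real.log c - (K:ℝ) * α * Real.log ρ ≤ Real.log g := by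
    have := Real.log_le_log (by positivity) hglow
    rw [Real.log_pow, Real.log_mul (ne_of_gt hc0) (ne_of_gt ht0), hlogt] at this
    calc (K:ℝ) * Real.log c - (K:ℝ) * α * Real.log ρ
        = (K:ℝ) * (Real.log c + (-α) * Real.log ρ) := by ring
    _ ≤ Real.log g := this
  have hlogup : Real.log g ≤ (K:ℝ) * Real.log C - (K:ℝ) * α * (1 - δ) * Real.log ρ := by
    have := Real.log_le_log hgpos hgup
    rw [Real.log_pow, Real.log_mul (ne_of_gt hC0) (by positivity),
      Real.log_rpow ht0, hlogt] at this
    calc Real.log g ≤ (K:ℝ) * (Real.log C + (1 - δ) * (-α * Real.log ρ)) := this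
    _ = (K:ℝ) * Real.log C - (K:ℝ) * α * (1 - δ) * Real.log ρ := by ring
  -- conclude
  rw [Real.dist_eq, abs_lt]
  have hKαδ : (K:ℝ) * α * δ ≤ ε / 4 := by
    have hδ2 : δ ≤ ε / (4 * K * α) := min_le_right _ _
    calc (K:ℝ) * α * δ ≤ (K:ℝ) * α * (ε / (4 * K * α)) := by
          apply mul_le_mul_of_nonneg_left hδ2 (by positivity)
    _ = ε / 4 := by field_simp
  have habs1 : -(ε/4) < (K:ℝ) * Real.log c / Real.log ρ := neg_lt_of_abs_lt h1
  have habs2 : (K:ℝ) * Real.log C / Real.log ρ < ε/4 := lt_of_abs_lt h2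
  have flow : (K:ℝ) * Real.log c / Real.log ρ - (K:ℝ) * α ≤ Real.log g / Real.log ρ := by
    have h3 : ((K:ℝ) * Real.log c - (K:ℝ) * α * Real.log ρ) / Real.log ρ
        ≤ Real.log g / Real.log ρ := by gcongr
    have h4 : ((K:ℝ) * Real.log c - (K:ℝ) * α * Real.log ρ) / Real.log ρ
        = (K:ℝ) * Real.log c / Real.log ρ - (K:ℝ) * α := by
      field_simp
    linarith
  have fup : Real.log g / Real.log ρ
      ≤ (K:ℝ) * Real.log C / Real.log ρ - (K:ℝ) * α * (1 - δ) := by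
    have h3 : Real.log g / Real.log ρ
        ≤ ((K:ℝ) * Real.log C - (K:ℝ) * α * (1 - δ) * Real.log ρ) / Real.log ρ := by gcongr
    have h4 : ((K:ℝ) * Real.log C - (K:ℝ) * α * (1 - δ) * Real.log ρ) / Real.log ρ
        = (K:ℝ) * Real.log C / Real.log ρ - (K:ℝ) * α * (1 - δ) := by
      field_simp
    linarith
  have hexpand : (K:ℝ) * α * (1 - δ) = (K:ℝ) * α - (K:ℝ) * α * δ := by ring
  constructor
  · linarith [flow, habs1]
  · linarith [fup, habs2, hKαδ]
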